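/- arXiv:1403.6609 — 8 statements merged into one kernel-verified Lean document; each statement's English description precedes it below -/
import Mathlib

section
/- With [m]_q = (1-q^m)/(1-q), for every positive integer n: ∑_{j=1}^{n} q^{C(n+1,2) - C(j+1,2)} · [j]_q · [j^2]_q = ([C(n+1,2)]_q)^2, where C(m,2) = m(m-1)/2. -/
theorem q_nicomachus (q : ℝ) (hq : q ≠ 1) (n : ℕ) (hn : 0 < n) :
    ∑ j ∈ Finset.Icc 1 n,
        q ^ (n * (n + 1) / 2 - j * (j + 1) / 2) *
          ((1 - q ^ j) / (1 - q)) * ((1 - q ^ (j ^ 2)) / (1 - q)) =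
      ((1 - q ^ (n * (n + 1) / 2)) / (1 - q)) ^ 2 := by
  have hq1 : (1 : ℝ) - q ≠ 0 := sub_ne_zero.mpr (Ne.symm hq)
  induction n, hn using Nat.le_induction with
  | base =>
      simp only [Finset.Icc_self, Finset.sum_singleton]
      norm_num
      ring
  | succ n hn ih =>
      rw [Finset.sum_Icc_succ_top (by omega : 1 ≤ n + 1)]
      have hdn : 2 ∣ n * (n + 1) := (Nat.even_mul_succ_self n).two_dvd
      have hrec : (n + 1) * (n + 1 + 1) = n * (n + 1) + 2 * (n + 1) := by ring
      have e1 : (n + 1) * (n + 1 + 1) / 2 = n * (n + 1) / 2 + (n + 1) := by omega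
      have hsq : 2 * (n + 1) ^ 2 = n * (n + 1) + (n + 1) * (n + 1 + 1) := by ring
      have e2 : (n + 1) ^ 2 = n * (n + 1) / 2 + (n + 1) * (n + 1 + 1) / 2 := by omega
      have hcong : ∀ j ∈ Finset.Icc 1 n,
          q ^ ((n + 1) * (n + 1 + 1) / 2 - j * (j + 1) / 2) *
              ((1 - q ^ j) / (1 - q)) * ((1 - q ^ (j ^ 2)) / (1 - q)) =
          q ^ (n + 1) * (q ^ (n * (n + 1) / 2 - j * (j + 1) / 2) *
              ((1 - q ^ j) / (1 - q)) * ((1 - q ^ (j ^ 2)) / (1 - q))) := by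
        intro j hj
        simp only [Finset.mem_Icc] at hj
        have hdj : 2 ∣ j * (j + 1) := (Nat.even_mul_succ_self j).two_dvd
        have hle : j * (j + 1) ≤ n * (n + 1) :=
          Nat.mul_le_mul hj.2 (by omega)
        have : (n + 1) * (n + 1 + 1) / 2 - j * (j + 1) / 2 =
            (n + 1) + (n * (n + 1) / 2 - j * (j + 1) / 2) := by omega
        rw [this, pow_add]
        ring
      rw [Finset.sum_congr rfl hcong, ← Finset.mul_sum, ih, Nat.sub_self, pow_zero,
        e2, e1]
      simp only [pow_add]
      field_simp
      ring
end

section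
/- With [m]_q = (1-q^m)/(1-q), for every positive integer n: ∑_{j=1}^{n} q^{n-j} · [n^2 - n + 2j - 1]_q = [n]_q · [n^2]_q. -/
theorem q_wheatstone (q : ℝ) (hq : q ≠ 1) (n : ℕ) (hn : 0 < n) :
    ∑ j ∈ Finset.Icc 1 n,
        q ^ (n - j) * ((1 - q ^ (n ^ 2 - n + 2 * j - 1)) / (1 - q)) =
      ((1 - q ^ n) / (1 - q)) * ((1 - q ^ (n ^ 2)) / (1 - q)) := by
  have h1 : (1 : ℝ) - q ≠ 0 := fun h => hq (by linarith)
  have hnn : n ≤ n ^ 2 := Nat.le_self_pow two_ne_zero n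
  have key : ∀ j ∈ Finset.Icc 1 n,
      q ^ (n - j) * ((1 - q ^ (n ^ 2 - n + 2 * j - 1)) / (1 - q)) =
        (q ^ (n - j) - q ^ (n ^ 2 + j - 1)) / (1 - q) := by
    intro j hj
    simp only [Finset.mem_Icc] at hj
    have he : n - j + (n ^ 2 - n + 2 * j - 1) = n ^ 2 + j - 1 := by omega
    rw [mul_div_assoc', mul_sub, mul_one, ← pow_add, he]
  rw [Finset.sum_congr rfl key, ← Finset.sum_div]
  have hs : ∑ j ∈ Finset.Icc 1 n, (q ^ (n - j) - q ^ (n ^ 2 + j - 1)) =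
      (∑ i ∈ Finset.range n, q ^ i) - q ^ (n ^ 2) * ∑ i ∈ Finset.range n, q ^ i := by
    rw [Finset.sum_sub_distrib, Finset.mul_sum]
    congr 1
    · rw [← Finset.Ico_add_one_right_eq_Icc, Finset.sum_Ico_eq_sum_range, ← Finset.sum_range_reflect]
      apply Finset.sum_congr (by simp)
      intro i hi
      simp only [Finset.mem_range] at hi
      congr 1
      omega
    · rw [← Finset.Ico_add_one_right_eq_Icc, Finset.sum_Ico_eq_sum_range]
      apply Finset.sum_congr (by simp)
      intro i hi
      simp only [Finset.mem_range] at hi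
      rw [← pow_add]
      congr 1
      omega
  rw [hs, geom_sum_eq hq]
  have hq1 : q - 1 ≠ 0 := fun h => hq (by linarith)
  field_simp
  ring
end

section
/- With [m]_q = (1-q^m)/(1-q), for all positive integers n and nonnegative integers k: ∑_{j=1}^{n^k} q^{n^k - j} · [n^{k+1} - n^k + 2j - 1]_q = [n^k]_q · [n^{k+1}]_q. -/
theorem q_luthy (q : ℝ) (hq : q ≠ 1) (n : ℕ) (hn : 0 < n) (k : ℕ) :
    ∑ j ∈ Finset.Icc 1 (n ^ k),
        q ^ (n ^ k - j) * ((1 - q ^ (n ^ (k + 1) - n ^ k + 2 * j - 1)) / (1 - q)) =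
      ((1 - q ^ (n ^ k)) / (1 - q)) * ((1 - q ^ (n ^ (k + 1))) / (1 - q)) := by
  have hq1 : (1:ℝ) - q ≠ 0 := sub_ne_zero.mpr (Ne.symm hq)
  set N := n ^ k with hN
  set M := n ^ (k + 1) with hM
  have hNM : N ≤ M := Nat.pow_le_pow_right hn (by omega)
  have key : ∀ j ∈ Finset.Icc 1 N,
      q ^ (N - j) * ((1 - q ^ (M - N + 2 * j - 1)) / (1 - q)) =
      (q ^ (N - j) - q ^ (M + j - 1)) / (1 - q) := by
    intro j hj
    simp only [Finset.mem_Icc] at hj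
    have h1 : (N - j) + (M - N + 2 * j - 1) = M + j - 1 := by omega
    rw [mul_div_assoc', mul_sub, mul_one, ← pow_add, h1]
  rw [Finset.sum_congr rfl key]
  rw [← Finset.sum_div, Finset.sum_sub_distrib]
  have e1 : ∑ j ∈ Finset.Icc 1 N, q ^ (N - j) = ∑ i ∈ Finset.range N, q ^ i := by
    rw [← Finset.Ico_add_one_right_eq_Icc, Finset.sum_Ico_eq_sum_range]
    rw [← Finset.sum_range_reflect]
    apply Finset.sum_congr rfl
    intro i hi
    simp only [Finset.mem_range] at hi
    congr 1
    omega
  have e2 : ∑ j ∈ Finset.Icc 1 N, q ^ (M + j - 1) =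
      q ^ M * ∑ i ∈ Finset.range N, q ^ i := by
    rw [← Finset.Ico_add_one_right_eq_Icc, Finset.sum_Ico_eq_sum_range, Finset.mul_sum]
    apply Finset.sum_congr rfl
    intro i hi
    rw [← pow_add]
    congr 1
    omega
  rw [e1, e2]
  rw [geom_sum_eq hq N]
  have hq1' : q - 1 ≠ 0 := sub_ne_zero.mpr hq
  field_simp
  ring
end

section
/- With [m]_{q^2} = (1-q^{2m})/(1-q^2), for all nonnegative integers n and m: ∑_{k=0}^{n} q^{n-k} · [mn+k]_{q^2} = [n+1 choose 2]_q · [2m+1]_{q^n}, where [n+1 choose 2]_q = [n+1]_q[n]_q/[2]_q and [2m+1]_{q^n} = (1-q^{(2m+1)n})/(1-q^n). -/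
theorem q_identity_26 (q : ℝ) (hq : q ≠ 1) (hq' : q ≠ -1) (n m : ℕ)
    (hqn : q ^ n ≠ 1) :
    ∑ k ∈ Finset.range (n + 1),
        q ^ (n - k) * ((1 - q ^ (2 * (m * n + k))) / (1 - q ^ 2)) =
      ((1 - q ^ (n + 1)) * (1 - q ^ n) / ((1 - q) * (1 - q ^ 2))) *
        ((1 - q ^ ((2 * m + 1) * n)) / (1 - q ^ n)) := by
  have h1 : 1 - q ≠ 0 := sub_ne_zero.mpr hq.symm
  have h1b : q - 1 ≠ 0 := sub_ne_zero.mpr hq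
  have h1' : 1 + q ≠ 0 := by
    intro h; apply hq'; linarith
  have h2 : 1 - q ^ 2 ≠ 0 := by
    have : 1 - q ^ 2 = (1 - q) * (1 + q) := by ring
    rw [this]; exact mul_ne_zero h1 h1'
  have hn : 1 - q ^ n ≠ 0 := sub_ne_zero.mpr (Ne.symm hqn)
  have step : ∀ k ∈ Finset.range (n + 1),
      q ^ (n - k) * ((1 - q ^ (2 * (m * n + k))) / (1 - q ^ 2))
        = (q ^ (n - k) - q ^ (2 * (m * n) + n) * q ^ k) / (1 - q ^ 2) := by
    intro k hk
    have hk' : k ≤ n := Nat.lt_succ_iff.mp (Finset.mem_range.mp hk)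
    have he : n - k + 2 * (m * n + k) = 2 * (m * n) + n + k := by omega
    rw [mul_div_assoc', mul_sub, mul_one, ← pow_add, he, pow_add]
  rw [Finset.sum_congr rfl step, ← Finset.sum_div, Finset.sum_sub_distrib,
    ← Finset.mul_sum]
  have hrefl : ∑ k ∈ Finset.range (n + 1), q ^ (n - k)
      = ∑ k ∈ Finset.range (n + 1), q ^ k := by
    have := Finset.sum_range_reflect (fun k => q ^ k) (n + 1)
    simpa using this
  rw [hrefl, geom_sum_eq hq]
  have pe : (2 * m + 1) * n = 2 * (m * n) + n := by ring
  rw [pe]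
  field_simp
  ring
end

section
/- With [m]_{q^2} = (1-q^{2m})/(1-q^2), for every nonnegative integer n: ∑_{j=(3^n+1)/2}^{(3^{n+1}-1)/2} q^{(3^{n+1}-1-2j)/2} · [j]_{q^2} = [3^n]_q · [3^n]_{q^2}. -/
theorem q_wheatstone_29 (q : ℝ) (hq : q ≠ 1) (hq' : q ≠ -1) (n : ℕ) :
    ∑ j ∈ Finset.Icc ((3 ^ n + 1) / 2) ((3 ^ (n + 1) - 1) / 2),
        q ^ ((3 ^ (n + 1) - 1 - 2 * j) / 2) * ((1 - q ^ (2 * j)) / (1 - q ^ 2)) =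
      ((1 - q ^ (3 ^ n)) / (1 - q)) * ((1 - q ^ (2 * 3 ^ n)) / (1 - q ^ 2)) := by
  have h1 : (1 : ℝ) - q ≠ 0 := sub_ne_zero.mpr (fun h => hq h.symm)
  have hq1 : q - 1 ≠ 0 := sub_ne_zero.mpr hq
  have h1' : (1 : ℝ) + q ≠ 0 := fun h => hq' (by linarith)
  have h2 : (1 : ℝ) - q ^ 2 ≠ 0 := by
    have h : (1 : ℝ) - q ^ 2 = (1 - q) * (1 + q) := by ring
    rw [h]; exact mul_ne_zero h1 h1'
  obtain ⟨m, hm⟩ : Odd (3 ^ n) := Odd.pow (by decide)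
  have hub : 3 ^ (n + 1) = 6 * m + 3 := by rw [pow_succ]; omega
  have e1 : (3 ^ n + 1) / 2 = m + 1 := by omega
  have e2 : (3 ^ (n + 1) - 1) / 2 = 3 * m + 1 := by omega
  have e3 : 3 ^ n = 2 * m + 1 := by omega
  have e4 : 2 * 3 ^ n = 4 * m + 2 := by omega
  rw [e1, e2, e4, e3]
  have step : ∑ j ∈ Finset.Icc (m + 1) (3 * m + 1),
      q ^ ((3 ^ (n + 1) - 1 - 2 * j) / 2) * ((1 - q ^ (2 * j)) / (1 - q ^ 2)) =
      ∑ i ∈ Finset.range (2 * m + 1), (q ^ (2 * m - i) - q ^ (4 * m + 2 + i)) / (1 - q ^ 2) := by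
    rw [← Finset.Ico_add_one_right_eq_Icc, Finset.sum_Ico_eq_sum_range]
    apply Finset.sum_congr
    · congr 1; omega
    intro i hi
    simp only [Finset.mem_range] at hi
    have hx : (3 ^ (n + 1) - 1 - 2 * (m + 1 + i)) / 2 = 2 * m - i := by omega
    rw [hx, mul_div_assoc']
    congr 1
    rw [mul_sub, mul_one, ← pow_add]
    congr 2
    omega
  rw [step, ← Finset.sum_div, Finset.sum_sub_distrib]
  have r1 : ∑ i ∈ Finset.range (2 * m + 1), q ^ (2 * m - i)
      = ∑ i ∈ Finset.range (2 * m + 1), q ^ i := by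
    have := Finset.sum_range_reflect (fun i => q ^ i) (2 * m + 1)
    simpa using this
  have r2 : ∑ i ∈ Finset.range (2 * m + 1), q ^ (4 * m + 2 + i)
      = q ^ (4 * m + 2) * ∑ i ∈ Finset.range (2 * m + 1), q ^ i := by
    rw [Finset.mul_sum]
    exact Finset.sum_congr rfl fun i _ => by rw [pow_add]
  rw [r1, r2, geom_sum_eq hq]
  field_simp
  ring
end

section
/- With [m]_q = (1-q^m)/(1-q), for every positive integer n: ∑_{j=0}^{n-1} q^{n^2-1-(n+1)j} · [2(n+1)j+1]_q = [n^2]_q · [n]_{q^{n+1}}, where [n]_{q^{n+1}} = (1-q^{n(n+1)})/(1-q^{n+1}). -/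
theorem q_identity_32 (q : ℝ) (hq : q ≠ 1) (n : ℕ) (hn : 0 < n)
    (hqn : q ^ (n + 1) ≠ 1) :
    ∑ j ∈ Finset.range n,
        q ^ (n ^ 2 - 1 - (n + 1) * j) * ((1 - q ^ (2 * (n + 1) * j + 1)) / (1 - q)) =
      ((1 - q ^ (n ^ 2)) / (1 - q)) * ((1 - q ^ (n * (n + 1))) / (1 - q ^ (n + 1))) := by
  have h1 : (1 : ℝ) - q ≠ 0 := sub_ne_zero.mpr (Ne.symm hq)
  have h2 : (1 : ℝ) - q ^ (n + 1) ≠ 0 := sub_ne_zero.mpr (Ne.symm hqn)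
  have key : ∀ j ∈ Finset.range n,
      q ^ (n ^ 2 - 1 - (n + 1) * j) * ((1 - q ^ (2 * (n + 1) * j + 1)) / (1 - q)) =
      (q ^ ((n + 1) * (n - 1 - j)) - q ^ (n ^ 2 + (n + 1) * j)) / (1 - q) := by
    intro j hj
    rw [Finset.mem_range] at hj
    obtain ⟨k, hk⟩ : ∃ k, n = j + k + 1 := ⟨n - j - 1, by omega⟩
    have e0 : n - 1 - j = k := by omega
    have e1 : n ^ 2 - 1 - (n + 1) * j = (n + 1) * k := by
      subst hk
      rw [Nat.sub_sub, Nat.sub_eq_iff_eq_add (by nlinarith)]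
      ring
    rw [e0, e1, mul_div_assoc', mul_sub, mul_one, ← pow_add]
    congr 2
    subst hk; ring
  rw [Finset.sum_congr rfl key, ← Finset.sum_div, Finset.sum_sub_distrib]
  have r1 : ∑ j ∈ Finset.range n, q ^ ((n + 1) * (n - 1 - j)) =
      ((q ^ (n + 1)) ^ n - 1) / (q ^ (n + 1) - 1) := by
    rw [Finset.sum_range_reflect (fun j => q ^ ((n + 1) * j)) n]
    rw [← geom_sum_eq hqn n]
    exact Finset.sum_congr rfl fun j _ => by rw [← pow_mul, mul_comm]
  have r2 : ∑ j ∈ Finset.range n, q ^ (n ^ 2 + (n + 1) * j) =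
      q ^ (n ^ 2) * (((q ^ (n + 1)) ^ n - 1) / (q ^ (n + 1) - 1)) := by
    rw [← geom_sum_eq hqn n, Finset.mul_sum]
    exact Finset.sum_congr rfl fun j _ => by
      rw [pow_add, ← pow_mul, mul_comm (n+1) j]
  rw [r1, r2]
  have h3 : q ^ (n + 1) - 1 ≠ 0 := sub_ne_zero.mpr hqn
  field_simp
  ring
end

section
/- With [m]_q = (1-q^m)/(1-q), for all positive integers n and m: ∑_{k=0}^{n-1} q^{n^m(n-1) - k·n^m} · [(2k+1)·n^m]_q = [n^{m+1}]_q · [n]_{q^{n^m}}. -/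
theorem q_identity_34 (q : ℝ) (hq : q ≠ 1) (n m : ℕ) (hn : 0 < n) (hm : 0 < m)
    (hqn : q ^ (n ^ m) ≠ 1) :
    ∑ k ∈ Finset.range n,
        q ^ (n ^ m * (n - 1) - k * n ^ m) * ((1 - q ^ ((2 * k + 1) * n ^ m)) / (1 - q)) =
      ((1 - q ^ (n ^ (m + 1))) / (1 - q)) * ((1 - q ^ (n * n ^ m)) / (1 - q ^ (n ^ m))) := by
  set N := n ^ m with hNdef
  have hd1 : (1 : ℝ) - q ≠ 0 := sub_ne_zero.mpr (Ne.symm hq)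
  have hd2 : (1 : ℝ) - q ^ N ≠ 0 := sub_ne_zero.mpr (Ne.symm hqn)
  have hij : ∀ k ∈ Finset.range n,
      q ^ (N * (n - 1) - k * N) * ((1 - q ^ ((2 * k + 1) * N)) / (1 - q))
        = ((q ^ N) ^ (n - 1 - k) - q ^ (n * N) * (q ^ N) ^ k) / (1 - q) := by
    intro k hk
    have hk' : k ≤ n - 1 := Nat.le_sub_one_of_lt (Finset.mem_range.mp hk)
    have h1 : N * (n - 1) - k * N = N * (n - 1 - k) := by
      rw [mul_comm k N, ← Nat.mul_sub]
    have h2 : N * (n - 1 - k) + (2 * k + 1) * N = n * N + k * N := by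
      rw [mul_comm N (n - 1 - k), ← add_mul, ← add_mul]
      congr 1
      omega
    rw [h1, mul_div_assoc']
    congr 1
    rw [mul_sub, mul_one, ← pow_add, h2, pow_add, mul_comm k N]
    simp [pow_mul]
  rw [Finset.sum_congr rfl hij, ← Finset.sum_div, Finset.sum_sub_distrib,
    Finset.sum_range_reflect (fun k => (q ^ N) ^ k) n, ← Finset.mul_sum,
    geom_sum_eq hqn n]
  have h3 : q ^ (n ^ (m + 1)) = (q ^ N) ^ n := by
    rw [hNdef, ← pow_mul, pow_succ, mul_comm]
  have h4 : q ^ (n * N) = (q ^ N) ^ n := by rw [← pow_mul, mul_comm]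
  rw [h3, h4]
  have hd2' : q ^ N - 1 ≠ 0 := sub_ne_zero.mpr hqn
  field_simp
  ring
end

section
/- With [m]_q = (1-q^m)/(1-q), for every positive integer n: ∑_{j=0}^{2n} q^{8n-4j} · [(2n-1)^2 + 8j]_q = [2n+1]_q · [2n+1]_{q^4} · [2n+1]_{q^{2n+1}}, where [2n+1]_{q^4} = (1-q^{4(2n+1)})/(1-q^4) and [2n+1]_{q^{2n+1}} = (1-q^{(2n+1)^2})/(1-q^{2n+1}). -/
theorem q_theorem_5 (q : ℝ) (hq : q ≠ 1) (hq' : q ≠ -1) (n : ℕ) (hn : 0 < n)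
    (hqn : q ^ (2 * n + 1) ≠ 1) :
    ∑ j ∈ Finset.range (2 * n + 1),
        q ^ (8 * n - 4 * j) * ((1 - q ^ ((2 * n - 1) ^ 2 + 8 * j)) / (1 - q)) =
      ((1 - q ^ (2 * n + 1)) / (1 - q)) * ((1 - q ^ (4 * (2 * n + 1))) / (1 - q ^ 4)) *
        ((1 - q ^ ((2 * n + 1) ^ 2)) / (1 - q ^ (2 * n + 1))) := by
  have h1 : (1 : ℝ) - q ≠ 0 := fun h => hq (by linarith)
  have h4 : (1 : ℝ) - q ^ 4 ≠ 0 := by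
    intro h
    have h2 : q ^ 2 = 1 := by nlinarith [sq_nonneg (q ^ 2 + 1), sq_nonneg (q ^ 2 - 1)]
    have : (q - 1) * (q + 1) = 0 := by nlinarith
    rcases mul_eq_zero.1 this with h | h
    · exact hq (by linarith)
    · exact hq' (by linarith)
  have hN : (1 : ℝ) - q ^ (2 * n + 1) ≠ 0 := fun h => hqn (by linarith)
  set G : ℝ := ∑ j ∈ Finset.range (2 * n + 1), (q ^ 4) ^ j with hGdef
  -- geometric sum facts
  have hG : G * (q ^ 4 - 1) = (q ^ 4) ^ (2 * n + 1) - 1 := geom_sum_mul (q ^ 4) (2 * n + 1)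
  have h44 : 1 - q ^ (4 * (2 * n + 1)) = G * (1 - q ^ 4) := by
    rw [pow_mul]; linarith [hG]
  -- transform the sum
  have hsum : ∑ j ∈ Finset.range (2 * n + 1),
      q ^ (8 * n - 4 * j) * ((1 - q ^ ((2 * n - 1) ^ 2 + 8 * j)) / (1 - q))
      = (G - q ^ ((2 * n + 1) ^ 2) * G) / (1 - q) := by
    have step : ∀ j ∈ Finset.range (2 * n + 1),
        q ^ (8 * n - 4 * j) * ((1 - q ^ ((2 * n - 1) ^ 2 + 8 * j)) / (1 - q))
        = ((q ^ 4) ^ (2 * n - j) - q ^ ((2 * n + 1) ^ 2) * (q ^ 4) ^ j) / (1 - q) := by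
      intro j hj
      have hj' : j ≤ 2 * n := by simpa using Nat.lt_succ_iff.1 (Finset.mem_range.1 hj)
      have e1 : (q : ℝ) ^ (8 * n - 4 * j) = (q ^ 4) ^ (2 * n - j) := by
        rw [← pow_mul]; congr 1; omega
      have e2 : (q : ℝ) ^ (8 * n - 4 * j) * q ^ ((2 * n - 1) ^ 2 + 8 * j)
          = q ^ ((2 * n + 1) ^ 2) * (q ^ 4) ^ j := by
        rw [← pow_mul, ← pow_add, ← pow_add]
        congr 1
        zify [show 4 * j ≤ 8 * n by omega, show 1 ≤ 2 * n by omega]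
        ring
      rw [mul_div_assoc', mul_sub, mul_one, e2, e1]
    rw [Finset.sum_congr rfl step, ← Finset.sum_div, Finset.sum_sub_distrib,
      ← Finset.mul_sum, hGdef, ← Finset.sum_range_reflect (fun j => (q ^ 4) ^ j) (2 * n + 1)]
    norm_num
  rw [hsum, h44]
  field_simp
end
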